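/- Let A be a finite-dimensional k-algebra, P a finitely generated projective left A-module with two decompositions id_P = Σ_i a_i ∘ b_i = Σ_j a'_j ∘ b'_j where a_i, a'_j : A → P and b_i, b'_j : P → A are A-module maps. Then for any A-module endomorphism f of P and any symmetric linear form t on A (i.e. t(xy) = t(yx) for all x,y), we have Σ_i t((b_i ∘ f ∘ a_i)(1)) = Σ_j t((b'_j ∘ f ∘ a'_j)(1)). -/
import Mathlib


/-- The value `∑ i, t ((b i ∘ f ∘ a i) 1)` is independent of the chosen decomposition
`id_P = ∑ i, a i ∘ b i` of the identity of a finitely generated projective module `P`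
through the regular module, for any symmetric linear form `t` on `A`. -/
theorem stmt2 (k A P : Type) [Field k] [Ring A] [Algebra k A] [FiniteDimensional k A]
    [AddCommGroup P] [Module A P] [Module.Finite A P] [Module.Projective A P]
    (n m : ℕ) (a : Fin n → (A →ₗ[A] P)) (b : Fin n → (P →ₗ[A] A))
    (a' : Fin m → (A →ₗ[A] P)) (b' : Fin m → (P →ₗ[A] A))
    (ha : ∑ i, (a i) ∘ₗ (b i) = (LinearMap.id : P →ₗ[A] P))
    (ha' : ∑ j, (a' j) ∘ₗ (b' j) = (LinearMap.id : P →ₗ[A] P))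
    (t : A →ₗ[k] k) (ht : ∀ x y : A, t (x * y) = t (y * x))
    (f : P →ₗ[A] P) :
    ∑ i, t ((b i ∘ₗ f ∘ₗ a i) 1) = ∑ j, t ((b' j ∘ₗ f ∘ₗ a' j) 1) := by
  have key : ∀ (g : A →ₗ[A] P) (x : A), g x = x • g 1 := fun g x => by
    rw [← map_smul, smul_eq_mul, mul_one]
  have hL : ∀ i, t ((b i ∘ₗ f ∘ₗ a i) 1)
      = ∑ j, t (b i (a' j 1) * b' j (f (a i 1))) := by
    intro i
    have h1 : f (a i 1) = ∑ j, a' j (b' j (f (a i 1))) := by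
      conv_lhs => rw [← LinearMap.id_apply (R := A) (f (a i 1)), ← ha']
      simp [LinearMap.sum_apply]
    calc t ((b i ∘ₗ f ∘ₗ a i) 1)
        = t (b i (∑ j, a' j (b' j (f (a i 1))))) := by
          simp only [LinearMap.comp_apply]; rw [← h1]
      _ = ∑ j, t (b i (a' j (b' j (f (a i 1))))) := by rw [map_sum, map_sum]
      _ = ∑ j, t (b i (a' j 1) * b' j (f (a i 1))) := by
          refine Finset.sum_congr rfl fun j _ => ?_
          rw [key (a' j) (b' j (f (a i 1))), map_smul, smul_eq_mul, ht]
  have hR : ∀ j, t ((b' j ∘ₗ f ∘ₗ a' j) 1)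
      = ∑ i, t (b i (a' j 1) * b' j (f (a i 1))) := by
    intro j
    have h1 : (a' j 1 : P) = ∑ i, a i (b i (a' j 1)) := by
      conv_lhs => rw [← LinearMap.id_apply (R := A) (a' j 1), ← ha]
      simp [LinearMap.sum_apply]
    calc t ((b' j ∘ₗ f ∘ₗ a' j) 1)
        = t (b' j (f (∑ i, a i (b i (a' j 1))))) := by
          simp only [LinearMap.comp_apply]; rw [← h1]
      _ = ∑ i, t (b' j (f (a i (b i (a' j 1))))) := by rw [map_sum, map_sum, map_sum]
      _ = ∑ i, t (b i (a' j 1) * b' j (f (a i 1))) := by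
          refine Finset.sum_congr rfl fun i _ => ?_
          rw [key (a i) (b i (a' j 1)), map_smul, map_smul, smul_eq_mul]
  simp only [hL, hR]
  exact Finset.sum_comm
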